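/- Let f : ℝ → ℝ be defined by f(t) = a·e^{bt} + (c·n)/(4·a·c̄·(n-1))·e^{-bt} with a > 0, c̄ > 0, c > 0, n ≥ 2 an integer, and b = √(c̄/n). Then f is positive everywhere and satisfies the two Einstein equations f''/f = c̄/n and c̄(n-1)/n = (c + (n-1)(f')²)/f². -/

import Mathlib

/-- Case 1 of the classification of Einstein GRW warping functions:
`f(t) = a·e^{bt} + (c·n)/(4·a·c̄·(n-1))·e^{-bt}` with `a > 0`, `c̄ > 0`, `c > 0`,
`n ≥ 2`, `b = √(c̄/n)` is positive and satisfies the two Einstein equations. -/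
theorem stmt_0 (n : ℕ) (hn : 2 ≤ n) (a cbar c : ℝ) (ha : 0 < a) (hcbar : 0 < cbar)
    (hc : 0 < c) (b : ℝ) (hb : b = Real.sqrt (cbar / n))
    (f : ℝ → ℝ)
    (hf : f = fun t => a * Real.exp (b * t) +
      (c * n) / (4 * a * cbar * (n - 1)) * Real.exp (-b * t)) :
    (∀ t, 0 < f t) ∧
    (∀ t, deriv (deriv f) t / f t = cbar / n) ∧
    (∀ t, cbar * (n - 1) / n = (c + (n - 1) * (deriv f t) ^ 2) / (f t) ^ 2) := by
  have hn1 : (1:ℝ) < (n:ℝ) := by exact_mod_cast Nat.lt_of_lt_of_le one_lt_two hn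
  have hn0 : (0:ℝ) < (n:ℝ) := by linarith
  have hn1' : (0:ℝ) < (n:ℝ) - 1 := by linarith
  set k : ℝ := (c * n) / (4 * a * cbar * (n - 1)) with hk
  have hkpos : 0 < k := by
    apply div_pos (by positivity) (by positivity)
  have hbpos : 0 < b := by
    rw [hb]; exact Real.sqrt_pos.mpr (by positivity)
  have hb2 : b ^ 2 = cbar / n := by
    rw [hb, sq, Real.mul_self_sqrt (by positivity)]
  have hfpos : ∀ t, 0 < f t := by
    intro t; rw [hf]; positivity
  have hd1 : ∀ t, HasDerivAt f (a * b * Real.exp (b * t) - k * b * Real.exp (-b * t)) t := by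
    intro t
    rw [hf]
    have h1 : HasDerivAt (fun t : ℝ => b * t) b t := by
      simpa using (hasDerivAt_id t).const_mul b
    have h2 : HasDerivAt (fun t : ℝ => -b * t) (-b) t := by
      simpa using (hasDerivAt_id t).const_mul (-b)
    have e1 := (h1.exp).const_mul a
    have e2 := (h2.exp).const_mul k
    have := e1.add e2
    exact this.congr_deriv (by ring)
  have hderiv : deriv f = fun t => a * b * Real.exp (b * t) - k * b * Real.exp (-b * t) := by
    funext t; exact (hd1 t).deriv
  have hd2 : ∀ t, HasDerivAt (deriv f) (b ^ 2 * f t) t := by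
    intro t
    rw [hderiv]
    have h1 : HasDerivAt (fun t : ℝ => b * t) b t := by
      simpa using (hasDerivAt_id t).const_mul b
    have h2 : HasDerivAt (fun t : ℝ => -b * t) (-b) t := by
      simpa using (hasDerivAt_id t).const_mul (-b)
    have e1 := (h1.exp).const_mul (a * b)
    have e2 := (h2.exp).const_mul (k * b)
    have := e1.sub e2
    have hfval : f t = a * Real.exp (b * t) + k * Real.exp (-b * t) := by rw [hf]
    refine this.congr_deriv ?_
    rw [hfval]; ring
  refine ⟨hfpos, ?_, ?_⟩
  · intro t
    rw [(hd2 t).deriv, hb2, mul_div_assoc, div_self (hfpos t).ne', mul_one]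
  · intro t
    have hft := hfpos t
    have hfval : f t = a * Real.exp (b * t) + k * Real.exp (-b * t) := by rw [hf]
    have hE : Real.exp (b * t) * Real.exp (-(b * t)) = 1 := by
      rw [← Real.exp_add]; ring_nf; exact Real.exp_zero
    have hck : 4 * a * k * cbar * ((n:ℝ) - 1) = c * n := by
      rw [hk]; field_simp
    rw [hderiv]
    rw [eq_div_iff (by positivity)]
    rw [hfval]
    have hb2' : b ^ 2 * n = cbar := by rw [hb2]; field_simp
    field_simp
    linear_combination (-((n:ℝ)-1)*(a*Real.exp (b*t)+k*Real.exp (-(b*t)))^2 + 4*a*k*((n:ℝ)-1)) * hb2'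
      + 4*a*k*b^2*(n:ℝ)*((n:ℝ)-1) * hE + hck
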